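/- Let n be even and M the adjacency matrix of the hypercube Cayley graph of (F₂ⁿ, Sₙ). The vector in F₂^{2ⁿ} of weight 1 supported on the single vertex 0 does not belong to the row space of M. -/

import Mathlib

open Finset

lemma sphere_eq {n : ℕ} (x : Fin n → ZMod 2) :
    ({y | hammingDist x y = 1} : Finset (Fin n → ZMod 2)) =
      Finset.image (fun i => Function.update x i (x i + 1)) Finset.univ := by
  ext y
  simp only [Finset.mem_filter, Finset.mem_univ, true_and, Finset.mem_image]
  constructor
  · intro h
    rw [hammingDist, Finset.card_eq_one] at h
    obtain ⟨i, hi⟩ := h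
    refine ⟨i, ?_⟩
    have hmem : ∀ j : Fin n, x j ≠ y j ↔ j = i := by
      intro j
      constructor
      · intro hj
        have : j ∈ ({j | x j ≠ y j} : Finset (Fin n)) := by simp [hj]
        rw [hi] at this; simpa using this
      · intro hj
        have : i ∈ ({k | x k ≠ y k} : Finset (Fin n)) := by rw [hi]; simp
        rw [hj]; simpa using this
    funext j
    by_cases hj : j = i
    · subst hj
      have : x j ≠ y j := (hmem j).mpr rfl
      simp only [Function.update_self]
      revert this; generalize x j = a; generalize y j = b
      revert a b; decide
    · have : x j = y j := by
        by_contra hne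
        exact hj ((hmem j).mp hne)
      simp [Function.update_of_ne hj, this]
  · rintro ⟨i, rfl⟩
    rw [hammingDist]
    have : ({j | x j ≠ Function.update x i (x i + 1) j} : Finset (Fin n)) = {i} := by
      ext j
      by_cases hj : j = i
      · subst hj; simp [Function.update_self]
      · simp [Function.update_of_ne hj, hj]
    rw [this, Finset.card_singleton]

/-- for even `n`, the weight-1 vector supported on the single vertex
`0 ∈ F₂ⁿ` is not in the row space of the hypercube adjacency matrix. -/
theorem stmt11 (n : ℕ) (hn : Even n)
    (M : Matrix (Fin n → ZMod 2) (Fin n → ZMod 2) (ZMod 2))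
    (hM : ∀ x y, M x y = if hammingDist x y = 1 then 1 else 0) :
    (fun y : Fin n → ZMod 2 => if y = 0 then (1 : ZMod 2) else 0) ∉
      Submodule.span (ZMod 2) (Set.range M) := by
  intro hmem
  have key : ∀ v ∈ Submodule.span (ZMod 2) (Set.range M),
      ∑ y : Fin n → ZMod 2, v y * ((∑ i, y i) + 1) = 0 := by
    intro v hv
    induction hv using Submodule.span_induction with
    | mem v hv =>
      obtain ⟨x, rfl⟩ := hv
      simp only [hM, ite_mul, one_mul, zero_mul]
      rw [← Finset.sum_filter]
      have heq : (Finset.filter (fun y => hammingDist x y = 1) Finset.univ)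
          = Finset.image (fun i => Function.update x i (x i + 1)) Finset.univ := sphere_eq x
      rw [heq, Finset.sum_image ?_]
      · have hterm : ∀ i : Fin n,
            (∑ k, Function.update x i (x i + 1) k) + 1 = ∑ k, x k := by
          intro i
          rw [Finset.sum_update_of_mem (Finset.mem_univ i),
            Finset.sum_eq_add_sum_sdiff_singleton_of_mem (Finset.mem_univ i) x]
          generalize x i = a
          generalize (∑ k ∈ Finset.univ \ {i}, x k) = S
          revert a S; decide
        simp only [hterm, Finset.sum_const, Finset.card_univ, Fintype.card_fin, smul_eq_mul]
        have : ((n : ZMod 2)) = 0 := by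
          obtain ⟨m, rfl⟩ := hn
          push_cast
          ring_nf
          simp [show ((2:ZMod 2)) = 0 from rfl]
        rw [nsmul_eq_mul, this, zero_mul]
      · intro i _ j _ hij
        by_contra hne
        have := congrFun hij i
        beta_reduce at this
        rw [Function.update_self, Function.update_of_ne hne] at this
        revert this
        generalize x i = a; revert a; decide
    | zero => simp
    | add u w _ _ hu hw => simp only [Pi.add_apply, add_mul, Finset.sum_add_distrib, hu, hw, add_zero]
    | smul a v _ ih => simp only [Pi.smul_apply, smul_eq_mul, mul_assoc, ← Finset.mul_sum, ih, mul_zero]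
  have h1 := key _ hmem
  simp only [ite_mul, one_mul, zero_mul, Finset.sum_ite_eq', Finset.mem_univ, if_true] at h1
  simp at h1
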